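/- Let F be a field and ℓ ≥ 1. Define the fold operation: for b : Fin (2*m) → F and nonzero x ∈ F, fold x b : Fin m → F is given by (fold x b) i = b_L i + x⁻¹ * b_R i. Let x_1, …, x_ℓ ∈ F be nonzero and let u_i : Fin (2^ℓ) → F be the i-th standard unit vector, where i has binary expansion i = ∑_{k<ℓ} i_k 2^k. Then applying fold x_1, then fold x_2, …, then fold x_ℓ to u_i yields the vector of length 1 whose single entry equals ∏_{k=1}^{ℓ} (x_k⁻¹)^{i_{ℓ-k}}. -/

import Mathlib

/-- One folding round of the scalar vector: `(fold m x b) i = b_L i + x⁻¹ * b_R i`. -/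
def fold {F : Type*} [Field F] (m : ℕ) (x : F) (b : Fin (2 * m) → F) : Fin m → F :=
  fun i => b ⟨i.val, by have := i.isLt; omega⟩ + x⁻¹ * b ⟨m + i.val, by have := i.isLt; omega⟩

/-- Iterated folding with challenges `x 0, x 1, …` applied in order. -/
def foldIter {F : Type*} [Field F] : (ℓ : ℕ) → (Fin ℓ → F) → (Fin (2 ^ ℓ) → F) → (Fin 1 → F)
  | 0, _, b => b
  | (ℓ + 1), x, b =>
      foldIter ℓ (fun k => x k.succ)
        (fold (2 ^ ℓ) (x 0) (fun i => b (Fin.cast (show 2 * 2 ^ ℓ = 2 ^ (ℓ + 1) by ring) i)))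

lemma mod_div_two_aux (i d ℓ : ℕ) (h : d < ℓ) :
    (i % 2 ^ ℓ) / 2 ^ d % 2 = i / 2 ^ d % 2 := by
  have h1 : (2:ℕ) ^ ℓ = 2 ^ d * 2 ^ (ℓ - d) := by rw [← pow_add]; congr 1; omega
  rw [h1, Nat.mod_mul_right_div_self, Nat.mod_mod_of_dvd]
  exact dvd_pow_self 2 (by omega)

lemma fold_aux {F : Type*} [Field F] : ∀ (ℓ : ℕ) (x : Fin ℓ → F) (c : F) (i : Fin (2 ^ ℓ)),
    foldIter ℓ x (fun a => if a = i then c else 0) =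
      fun _ => c * ∏ k : Fin ℓ, ((x k)⁻¹) ^ (i.val / 2 ^ (ℓ - 1 - k.val) % 2) := by
  intro ℓ
  induction ℓ with
  | zero =>
    intro x c i
    funext a
    simp [foldIter, Subsingleton.elim a i]
  | succ ℓ ih =>
    intro x c i
    have hpos : 0 < (2:ℕ) ^ ℓ := Nat.pow_pos (by norm_num)
    have hi : i.val < 2 * 2 ^ ℓ := by have := i.isLt; omega
    set i' : Fin (2 ^ ℓ) := ⟨i.val % 2 ^ ℓ, Nat.mod_lt _ hpos⟩ with hi'
    have hfold : (fold (2 ^ ℓ) (x 0)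
        (fun j => (fun a => if a = i then c else 0)
          (Fin.cast (show 2 * 2 ^ ℓ = 2 ^ (ℓ + 1) by ring) j)))
        = fun a => if a = i' then c * ((x 0)⁻¹) ^ (i.val / 2 ^ ℓ) else 0 := by
      funext a
      have ha := a.isLt
      simp only [fold, Fin.ext_iff, Fin.coe_cast]
      by_cases h : i.val < 2 ^ ℓ
      · have hd : i.val / 2 ^ ℓ = 0 := Nat.div_eq_of_lt h
        have hm : i.val % 2 ^ ℓ = i.val := Nat.mod_eq_of_lt h
        rw [if_neg (by omega : ¬ (2 ^ ℓ + a.val = i.val))]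
        simp [hi', hd, hm, Fin.ext_iff]
      · have hd : i.val / 2 ^ ℓ = 1 := by
          apply Nat.div_eq_of_lt_le <;> omega
        have hm : i.val % 2 ^ ℓ = i.val - 2 ^ ℓ := by
          rw [Nat.mod_eq_sub_mod (by omega)]
          exact Nat.mod_eq_of_lt (by omega)
        have hne : ¬ (a.val = i.val) := by omega
        rw [if_neg hne]
        simp only [hi', hd, hm, Fin.ext_iff, pow_one]
        by_cases h2 : 2 ^ ℓ + a.val = i.val
        · rw [if_pos h2, if_pos (by omega)]; ring
        · rw [if_neg h2, if_neg (by omega)]; ring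
    show foldIter ℓ (fun k => x k.succ) _ = _
    rw [hfold, ih]
    funext a
    rw [Fin.prod_univ_succ]
    have h0 : i.val / 2 ^ (ℓ + 1 - 1 - (0:Fin (ℓ+1)).val) % 2 = i.val / 2 ^ ℓ := by
      simp only [Fin.val_zero, Nat.sub_zero, Nat.add_sub_cancel]
      exact Nat.mod_eq_of_lt (by rw [Nat.div_lt_iff_lt_mul hpos]; omega)
    rw [h0]
    have hprod : ∀ k : Fin ℓ,
        ((x k.succ)⁻¹) ^ (i'.val / 2 ^ (ℓ - 1 - k.val) % 2)
          = ((x k.succ)⁻¹) ^ (i.val / 2 ^ (ℓ + 1 - 1 - (k.succ).val) % 2) := by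
      intro k
      congr 1
      have hk := k.isLt
      have : ℓ + 1 - 1 - (k.succ).val = ℓ - 1 - k.val := by simp [Fin.val_succ]; omega
      rw [this, hi']
      exact mod_div_two_aux i.val (ℓ - 1 - k.val) ℓ (by omega)
    rw [Finset.prod_congr rfl (fun k _ => hprod k)]
    ring

theorem stmt4 {F : Type*} [Field F] (ℓ : ℕ) (hℓ : 1 ≤ ℓ) (x : Fin ℓ → F)
    (hx : ∀ k, x k ≠ 0) (i : Fin (2 ^ ℓ)) :
    foldIter ℓ x (fun a => if a = i then (1 : F) else 0) =
      fun _ => ∏ k : Fin ℓ, ((x k)⁻¹) ^ (i.val / 2 ^ (ℓ - 1 - k.val) % 2) := by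
  rw [fold_aux]
  funext a
  rw [one_mul]
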